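/- Every polynomial function on the surface $X_{a,b} = \{x^2y = z^2 - b + ax\}$, i.e., every element of the quotient ring $\mathbb{C}[x,y,z]/(x^2y - z^2 + b - ax)$, can be written uniquely in the form $f(x,y,z) = \sum_{i\geq 1} x^i a_i(z) + \sum_{i \geq 1} x y^i b_i(z) + \sum_{i \geq 1} y^i c_i(z) + d(z)$ with $a_i, b_i, c_i, d \in \mathbb{C}[z]$ and only finitely many terms nonzero. -/

import Mathlib

open MvPolynomial

set_option maxHeartbeats 1000000 in
set_option synthInstance.maxHeartbeats 400000 in
/-- Every element of the coordinate ring `ℂ[x,y,z]/(x²y - z² + b - ax)` of `X_{a,b}`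
can be written uniquely as `∑ xⁱaᵢ(z) + ∑ x yʲ bⱼ(z) + ∑ yʲ cⱼ(z) + d(z)` (`i,j ≥ 1`):
that is, the classes of the monomials `x^(i+1) z^m`, `x y^(j+1) z^m`, `y^(j+1) z^m`, `z^m`
form a `ℂ`-vector space basis of the quotient ring. -/
theorem Xab_monomial_basis (a b : ℂ) :
    let x : MvPolynomial (Fin 3) ℂ := X 0
    let y : MvPolynomial (Fin 3) ℂ := X 1
    let z : MvPolynomial (Fin 3) ℂ := X 2
    let I : Ideal (MvPolynomial (Fin 3) ℂ) :=
      Ideal.span {x ^ 2 * y - z ^ 2 + C b - C a * x}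
    let fam : (ℕ × ℕ) ⊕ (ℕ × ℕ) ⊕ (ℕ × ℕ) ⊕ ℕ →
        MvPolynomial (Fin 3) ℂ ⧸ I := fun idx =>
      match idx with
      | .inl (i, m) => Ideal.Quotient.mk I (x ^ (i + 1) * z ^ m)
      | .inr (.inl (j, m)) => Ideal.Quotient.mk I (x * y ^ (j + 1) * z ^ m)
      | .inr (.inr (.inl (j, m))) => Ideal.Quotient.mk I (y ^ (j + 1) * z ^ m)
      | .inr (.inr (.inr m)) => Ideal.Quotient.mk I (z ^ m)
    LinearIndependent ℂ fam ∧ Submodule.span ℂ (Set.range fam) = ⊤ := by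
  intro x y z I fam
  set g : MvPolynomial (Fin 3) ℂ := x ^ 2 * y - z ^ 2 + C b - C a * x with hgdef
  have hgI : g ∈ I := Ideal.subset_span rfl
  -- the exponent map
  set E : (ℕ × ℕ) ⊕ (ℕ × ℕ) ⊕ (ℕ × ℕ) ⊕ ℕ → (Fin 3 →₀ ℕ) := fun idx =>
    match idx with
    | .inl (i, m) => Finsupp.single 0 (i+1) + Finsupp.single 2 m
    | .inr (.inl (j, m)) => Finsupp.single 0 1 + Finsupp.single 1 (j+1) + Finsupp.single 2 m
    | .inr (.inr (.inl (j, m))) => Finsupp.single 1 (j+1) + Finsupp.single 2 m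
    | .inr (.inr (.inr m)) => Finsupp.single 2 m
    with hEdef
  have hEinj : Function.Injective E := by
    intro p q h
    have h0 : (E p) 0 = (E q) 0 := by rw [h]
    have h1 : (E p) 1 = (E q) 1 := by rw [h]
    have h2 : (E p) 2 = (E q) 2 := by rw [h]
    clear h
    rcases p with ⟨i,m⟩|⟨j,m⟩|⟨j,m⟩|m <;> rcases q with ⟨i',m'⟩|⟨j',m'⟩|⟨j',m'⟩|m' <;>
      simp only [hEdef, Finsupp.add_apply, Finsupp.single_apply] at h0 h1 h2 <;>
      simp_all <;> omega
  -- fam as mk of monomials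
  have hfam : ∀ idx, fam idx = Ideal.Quotient.mk I (monomial (E idx) 1) := by
    rintro (⟨i,m⟩|⟨j,m⟩|⟨j,m⟩|m) <;> simp only [fam, hEdef] <;> congr 1
    · rw [show (x ^ (i+1) * z ^ m) = X 0 ^ (i+1) * X 2 ^ m from rfl,
        X_pow_eq_monomial, X_pow_eq_monomial, monomial_mul, mul_one]
    · rw [show (x * y ^ (j+1) * z ^ m) = X 0 * X 1 ^ (j+1) * X 2 ^ m from rfl, X,
        X_pow_eq_monomial, X_pow_eq_monomial, monomial_mul, monomial_mul, mul_one, mul_one]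
    · rw [show (y ^ (j+1) * z ^ m) = X 1 ^ (j+1) * X 2 ^ m from rfl,
        X_pow_eq_monomial, X_pow_eq_monomial, monomial_mul, mul_one]
    · exact X_pow_eq_monomial ..
  -- the submodule of polynomials supported on good monomials
  set M : Submodule ℂ (MvPolynomial (Fin 3) ℂ) :=
    { carrier := {p | ∀ d ∈ p.support, d 0 ≤ 1 ∨ d 1 = 0}
      add_mem' := by
        intro p q hp hq d hd
        rcases Finset.mem_union.mp (MvPolynomial.support_add hd) with h | h
        exacts [hp d h, hq d h]
      zero_mem' := by simp
      smul_mem' := by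
        intro c p hp d hd
        exact hp d (Finsupp.support_smul hd) } with hMdef
  -- key: M ∩ I = 0
  have hkey : ∀ p ∈ M, p ∈ I → p = 0 := by
    intro p hpM hpI
    by_contra hp0
    obtain ⟨q, hq⟩ := Ideal.mem_span_singleton'.mp hpI
    have hq0 : q ≠ 0 := by rintro rfl; simp at hq; exact hp0 hq.symm
    set B : ℕ := q.support.sup (fun d => d 1) with hB
    obtain ⟨d, hd, hdB⟩ := Finset.exists_mem_eq_sup q.support
      (Finset.nonempty_iff_ne_empty.mpr (mt MvPolynomial.support_eq_empty.mp hq0)) (fun d => d 1)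
    have hvan : ∀ d' : Fin 3 →₀ ℕ, B < d' 1 → coeff d' q = 0 := by
      intro d' hd'
      by_contra h
      have hle : d' 1 ≤ B := Finset.le_sup (f := fun d => d 1) (mem_support_iff.mpr h)
      omega
    set e : Fin 3 →₀ ℕ := d + (Finsupp.single 0 2 + Finsupp.single 1 1) with hedef
    have he1 : e 1 = d 1 + 1 := by simp [hedef, Finsupp.single_apply]
    have he0 : e 0 = d 0 + 2 := by simp [hedef, Finsupp.single_apply]
    have hgm : x ^ 2 * y - z ^ 2 + C b - C a * x = monomial (Finsupp.single 0 2 + Finsupp.single 1 1) 1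
        - monomial (Finsupp.single 2 2) 1 + monomial 0 b - monomial (Finsupp.single 0 1) a := by
      rw [show (x ^ 2 * y : MvPolynomial (Fin 3) ℂ)
            = monomial (Finsupp.single 0 2 + Finsupp.single 1 1) 1 from by
          rw [show (x ^ 2 * y : MvPolynomial (Fin 3) ℂ) = X 0 ^ 2 * X 1 ^ 1 from by rw [pow_one],
            X_pow_eq_monomial, X_pow_eq_monomial, monomial_mul, mul_one],
        show (z ^ 2 : MvPolynomial (Fin 3) ℂ) = monomial (Finsupp.single 2 2) 1 from
          X_pow_eq_monomial .. ,
        show (C a * x : MvPolynomial (Fin 3) ℂ) = monomial (Finsupp.single 0 1) a from by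
          rw [show (C a * x : MvPolynomial (Fin 3) ℂ) = C a * X 0 ^ 1 from by rw [pow_one],
            X_pow_eq_monomial, C_mul_monomial, mul_one],
        C_apply]
    have hcoeff : coeff e p = coeff d q := by
      rw [← hq, hgm, mul_sub, mul_add, mul_sub, coeff_sub, coeff_add, coeff_sub,
        coeff_mul_monomial', coeff_mul_monomial', coeff_mul_monomial', coeff_mul_monomial']
      have hu : (Finsupp.single (0 : Fin 3) 2 + Finsupp.single 1 1) ≤ e := by
        rw [hedef]; exact le_add_self
      rw [if_pos hu, show e - (Finsupp.single (0 : Fin 3) 2 + Finsupp.single 1 1) = d from by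
        rw [hedef]; exact add_tsub_cancel_right .. , mul_one]
      have e2 : coeff (e - Finsupp.single (2:Fin 3) 2) q = 0 := by
        apply hvan; rw [Finsupp.tsub_apply]; simp [Finsupp.single_apply, he1]; omega
      have e3 : coeff e q = 0 := by
        apply hvan; omega
      have e4 : coeff (e - Finsupp.single (0:Fin 3) 1) q = 0 := by
        apply hvan; rw [Finsupp.tsub_apply]; simp [Finsupp.single_apply, he1]; omega
      split_ifs <;> simp [e2, e3, e4, tsub_zero]
    have : e ∈ p.support := mem_support_iff.mpr (by rw [hcoeff]; exact mem_support_iff.mp hd)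
    rcases hpM e this with h | h <;> omega
  -- linear independence
  have hLI : LinearIndependent ℂ fam := by
    have hli : LinearIndependent ℂ (fun idx => (monomial (E idx) 1 : MvPolynomial (Fin 3) ℂ)) := by
      have := (basisMonomials (Fin 3) ℂ).linearIndependent.comp E hEinj
      exact this
    have hdisj : Disjoint (Submodule.span ℂ (Set.range fun idx =>
        (monomial (E idx) 1 : MvPolynomial (Fin 3) ℂ))) (LinearMap.ker (Ideal.Quotient.mkₐ ℂ I).toLinearMap) := by
      rw [Submodule.disjoint_def]
      intro p hpspan hpker
      refine hkey p ?_ ?_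
      · refine Submodule.span_le.mpr ?_ hpspan
        rintro _ ⟨idx, rfl⟩ d hd
        rcases Finset.mem_singleton.mp (MvPolynomial.support_monomial_subset hd) with rfl
        rcases idx with ⟨i,m⟩|⟨j,m⟩|⟨j,m⟩|m
        · right; simp [hEdef, Finsupp.single_apply]
        · left; simp [hEdef, Finsupp.single_apply]
        · left; simp [hEdef, Finsupp.single_apply]
        · left; simp [hEdef, Finsupp.single_apply]
      · have h0 := LinearMap.mem_ker.mp hpker
        rw [AlgHom.toLinearMap_apply, Ideal.Quotient.mkₐ_eq_mk] at h0
        exact Ideal.Quotient.eq_zero_iff_mem.mp h0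
    have := hli.map (f := (Ideal.Quotient.mkₐ ℂ I).toLinearMap) hdisj
    convert this using 1
    · funext idx
      rw [hfam idx]; rfl
    all_goals rfl
  refine ⟨hLI, ?_⟩
  set S : Submodule ℂ (MvPolynomial (Fin 3) ℂ ⧸ I) := Submodule.span ℂ (Set.range fam) with hSdef
  have hmemA : ∀ k m : ℕ, Ideal.Quotient.mk I (x ^ k * z ^ m) ∈ S := by
    intro k m
    cases k with
    | zero =>
      rw [show (x ^ 0 * z ^ m : MvPolynomial (Fin 3) ℂ) = z ^ m from by rw [pow_zero, one_mul]]
      exact Submodule.subset_span ⟨.inr (.inr (.inr m)), rfl⟩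
    | succ k => exact Submodule.subset_span ⟨.inl (k, m), rfl⟩
  have hmemB : ∀ j m : ℕ, Ideal.Quotient.mk I (x * y ^ j * z ^ m) ∈ S := by
    intro j m
    cases j with
    | zero =>
      rw [show (x * y ^ 0 * z ^ m : MvPolynomial (Fin 3) ℂ) = x ^ (0 + 1) * z ^ m from by ring]
      exact Submodule.subset_span ⟨.inl (0, m), rfl⟩
    | succ j => exact Submodule.subset_span ⟨.inr (.inl (j, m)), rfl⟩
  have hmemC : ∀ j m : ℕ, Ideal.Quotient.mk I (y ^ j * z ^ m) ∈ S := by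
    intro j m
    cases j with
    | zero =>
      rw [show (y ^ 0 * z ^ m : MvPolynomial (Fin 3) ℂ) = z ^ m from by rw [pow_zero, one_mul]]
      exact Submodule.subset_span ⟨.inr (.inr (.inr m)), rfl⟩
    | succ j => exact Submodule.subset_span ⟨.inr (.inr (.inl (j, m))), rfl⟩
  have hsmul : ∀ (c : ℂ) (t : MvPolynomial (Fin 3) ℂ),
      Ideal.Quotient.mk I (C c * t) = c • Ideal.Quotient.mk I t := by
    intro c t
    rw [← smul_eq_C_mul, ← Ideal.Quotient.mkₐ_eq_mk ℂ I, map_smul]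
  have hkey2 : ∀ t : MvPolynomial (Fin 3) ℂ, Ideal.Quotient.mk I (x ^ 2 * y * t)
      = Ideal.Quotient.mk I (z ^ 2 * t) - b • Ideal.Quotient.mk I t
        + a • Ideal.Quotient.mk I (x * t) := by
    intro t
    have h1 : Ideal.Quotient.mk I (x ^ 2 * y * t)
        = Ideal.Quotient.mk I (z ^ 2 * t - C b * t + C a * (x * t)) := by
      rw [Ideal.Quotient.eq]
      have h2 : x ^ 2 * y * t - (z ^ 2 * t - C b * t + C a * (x * t))
          = (x ^ 2 * y - z ^ 2 + C b - C a * x) * t := by ring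
      rw [h2]
      exact Ideal.mul_mem_right t I hgI
    rw [h1, map_add, map_sub, hsmul, hsmul]
  have hclosed : ∀ (i : Fin 3) (s : MvPolynomial (Fin 3) ℂ ⧸ I), s ∈ S →
      s * Ideal.Quotient.mk I (X i) ∈ S := by
    intro i s hs
    induction hs using Submodule.span_induction with
    | mem u hu =>
      obtain ⟨idx, rfl⟩ := hu
      rcases idx with ⟨k, m⟩ | ⟨j, m⟩ | ⟨j, m⟩ | m <;> fin_cases i
      -- x^(k+1) z^m
      · show Ideal.Quotient.mk I (x ^ (k + 1) * z ^ m) * Ideal.Quotient.mk I (X 0) ∈ S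
        rw [← map_mul,
          show (x ^ (k + 1) * z ^ m * X 0 : MvPolynomial (Fin 3) ℂ) = x ^ (k + 2) * z ^ m from by
            show _ = x ^ (k + 2) * z ^ m; ring]
        exact hmemA (k + 2) m
      · show Ideal.Quotient.mk I (x ^ (k + 1) * z ^ m) * Ideal.Quotient.mk I (X 1) ∈ S
        rw [← map_mul]
        cases k with
        | zero =>
          rw [show (x ^ (0 + 1) * z ^ m * X 1 : MvPolynomial (Fin 3) ℂ) = x * y ^ 1 * z ^ m from by
            show _ = x * y ^ 1 * z ^ m; ring]
          exact hmemB 1 m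
        | succ k =>
          rw [show (x ^ (k + 1 + 1) * z ^ m * X 1 : MvPolynomial (Fin 3) ℂ)
              = x ^ 2 * y * (x ^ k * z ^ m) from by show _ = x ^ 2 * y * (x ^ k * z ^ m); ring,
            hkey2,
            show (z ^ 2 * (x ^ k * z ^ m) : MvPolynomial (Fin 3) ℂ) = x ^ k * z ^ (m + 2) from by
              ring,
            show (x * (x ^ k * z ^ m) : MvPolynomial (Fin 3) ℂ) = x ^ (k + 1) * z ^ m from by ring]
          exact S.add_mem (S.sub_mem (hmemA k (m + 2)) (S.smul_mem b (hmemA k m)))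
            (S.smul_mem a (hmemA (k + 1) m))
      · show Ideal.Quotient.mk I (x ^ (k + 1) * z ^ m) * Ideal.Quotient.mk I (X 2) ∈ S
        rw [← map_mul,
          show (x ^ (k + 1) * z ^ m * X 2 : MvPolynomial (Fin 3) ℂ) = x ^ (k + 1) * z ^ (m + 1)
            from by show _ = x ^ (k + 1) * z ^ (m + 1); ring]
        exact hmemA (k + 1) (m + 1)
      -- x y^(j+1) z^m
      · show Ideal.Quotient.mk I (x * y ^ (j + 1) * z ^ m) * Ideal.Quotient.mk I (X 0) ∈ S
        rw [← map_mul,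
          show (x * y ^ (j + 1) * z ^ m * X 0 : MvPolynomial (Fin 3) ℂ)
            = x ^ 2 * y * (y ^ j * z ^ m) from by show _ = x ^ 2 * y * (y ^ j * z ^ m); ring,
          hkey2,
          show (z ^ 2 * (y ^ j * z ^ m) : MvPolynomial (Fin 3) ℂ) = y ^ j * z ^ (m + 2) from by
            ring,
          show (x * (y ^ j * z ^ m) : MvPolynomial (Fin 3) ℂ) = x * y ^ j * z ^ m from by ring]
        exact S.add_mem (S.sub_mem (hmemC j (m + 2)) (S.smul_mem b (hmemC j m)))
          (S.smul_mem a (hmemB j m))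
      · show Ideal.Quotient.mk I (x * y ^ (j + 1) * z ^ m) * Ideal.Quotient.mk I (X 1) ∈ S
        rw [← map_mul,
          show (x * y ^ (j + 1) * z ^ m * X 1 : MvPolynomial (Fin 3) ℂ) = x * y ^ (j + 2) * z ^ m
            from by show _ = x * y ^ (j + 2) * z ^ m; ring]
        exact hmemB (j + 2) m
      · show Ideal.Quotient.mk I (x * y ^ (j + 1) * z ^ m) * Ideal.Quotient.mk I (X 2) ∈ S
        rw [← map_mul,
          show (x * y ^ (j + 1) * z ^ m * X 2 : MvPolynomial (Fin 3) ℂ)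
            = x * y ^ (j + 1) * z ^ (m + 1) from by show _ = x * y ^ (j + 1) * z ^ (m + 1); ring]
        exact hmemB (j + 1) (m + 1)
      -- y^(j+1) z^m
      · show Ideal.Quotient.mk I (y ^ (j + 1) * z ^ m) * Ideal.Quotient.mk I (X 0) ∈ S
        rw [← map_mul,
          show (y ^ (j + 1) * z ^ m * X 0 : MvPolynomial (Fin 3) ℂ) = x * y ^ (j + 1) * z ^ m
            from by show _ = x * y ^ (j + 1) * z ^ m; ring]
        exact hmemB (j + 1) m
      · show Ideal.Quotient.mk I (y ^ (j + 1) * z ^ m) * Ideal.Quotient.mk I (X 1) ∈ S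
        rw [← map_mul,
          show (y ^ (j + 1) * z ^ m * X 1 : MvPolynomial (Fin 3) ℂ) = y ^ (j + 2) * z ^ m
            from by show _ = y ^ (j + 2) * z ^ m; ring]
        exact hmemC (j + 2) m
      · show Ideal.Quotient.mk I (y ^ (j + 1) * z ^ m) * Ideal.Quotient.mk I (X 2) ∈ S
        rw [← map_mul,
          show (y ^ (j + 1) * z ^ m * X 2 : MvPolynomial (Fin 3) ℂ) = y ^ (j + 1) * z ^ (m + 1)
            from by show _ = y ^ (j + 1) * z ^ (m + 1); ring]
        exact hmemC (j + 1) (m + 1)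
      -- z^m
      · show Ideal.Quotient.mk I (z ^ m) * Ideal.Quotient.mk I (X 0) ∈ S
        rw [← map_mul,
          show (z ^ m * X 0 : MvPolynomial (Fin 3) ℂ) = x ^ 1 * z ^ m from by
            show _ = x ^ 1 * z ^ m; ring]
        exact hmemA 1 m
      · show Ideal.Quotient.mk I (z ^ m) * Ideal.Quotient.mk I (X 1) ∈ S
        rw [← map_mul,
          show (z ^ m * X 1 : MvPolynomial (Fin 3) ℂ) = y ^ 1 * z ^ m from by
            show _ = y ^ 1 * z ^ m; ring]
        exact hmemC 1 m
      · show Ideal.Quotient.mk I (z ^ m) * Ideal.Quotient.mk I (X 2) ∈ S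
        rw [← map_mul,
          show (z ^ m * X 2 : MvPolynomial (Fin 3) ℂ) = z ^ (m + 1) from by
            show _ = z ^ (m + 1); ring]
        exact Submodule.subset_span ⟨.inr (.inr (.inr (m + 1))), rfl⟩
    | zero => simpa using S.zero_mem
    | add u v hu hv hu' hv' => rw [add_mul]; exact S.add_mem hu' hv'
    | smul c u hu hu' => rw [smul_mul_assoc]; exact S.smul_mem c hu'
  have hmk : ∀ p : MvPolynomial (Fin 3) ℂ, Ideal.Quotient.mk I p ∈ S := by
    intro p
    induction p using MvPolynomial.induction_on with
    | C c =>
      rw [show (C c : MvPolynomial (Fin 3) ℂ) = C c * (y ^ 0 * z ^ 0) from by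
        rw [pow_zero, pow_zero, one_mul, mul_one], hsmul]
      exact S.smul_mem c (hmemC 0 0)
    | add p q hp hq => rw [map_add]; exact S.add_mem hp hq
    | mul_X p i hp => rw [map_mul]; exact hclosed i _ hp
  rw [Submodule.eq_top_iff']
  intro u
  obtain ⟨p, rfl⟩ := Ideal.Quotient.mk_surjective u
  exact hmk p
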